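/- Path sampling representation of the log Bayes factor for factor models (Equations (2.2)–(2.3) applied to the PAMP). Let π be a probability measure on Θ such that (i) the function θ ↦ Q(θ,Y) is π-integrable, and (ii) there exists M < ∞ with f(Y|θ,t) ≤ M for all t ∈ [0,1] and π-almost every θ. Then log z₁ − log z₀ = ∫₀¹ E_t(U) dt, where z₁ and z₀ are the marginals of Y under the h-factor model M₁ (t = 1) and the (h−1)-factor model M₀ (t = 0), so the left side is the log Bayes factor of M₁ versus M₀, and E_t(U) = (∫_Θ U(θ,Y,t) f(Y|θ,t) dπ(θ)) / z_t. -/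

import Mathlib

/-!
STATEMENT 6 (Equations (2.2)–(2.3) for the PAMP): under integrability of Q and a.e.
boundedness of the path likelihood on [0,1],
log z₁ − log z₀ = ∫₀¹ E_t(U) dt, where z_t = ∫ f(Y|θ,t) dπ(θ) and
E_t(U) = (∫ U(θ,Y,t) f(Y|θ,t) dπ(θ)) / z_t; the left side is the log Bayes factor of the
h-factor model M₁ (t = 1) versus the (h−1)-factor model M₀ (t = 0).
-/

open MeasureTheory Real Filter Set

/-- The parameter space Θ of a factor model with `p` outcomes, `k+1` factors and `n`
observations: loadings Λ ∈ ℝ^{p×(k+1)}, variances σ² ∈ (0,∞)^p and latent factors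
η = (η₁,…,η_n), ηᵢ ∈ ℝ^{k+1}. -/
abbrev FactorParam (p k n : ℕ) : Type :=
  Matrix (Fin p) (Fin (k + 1)) ℝ × {σ : Fin p → ℝ // ∀ j, 0 < σ j} ×
    (Fin n → Fin (k + 1) → ℝ)

/-- Λ_t : the matrix obtained from Λ by multiplying its last column by `t` (PAMP). -/
def pathLam {p k : ℕ} (t : ℝ) (Λ : Matrix (Fin p) (Fin (k + 1)) ℝ) :
    Matrix (Fin p) (Fin (k + 1)) ℝ :=
  fun j l => if l = Fin.last k then t * Λ j l else Λ j l

/-- The factor model likelihood f(Y|θ) = ∏ᵢ∏ⱼ (2πσⱼ²)^{-1/2} exp(−(y_{ij} − (Ληᵢ)_j)²/(2σⱼ²)). -/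
noncomputable def lik {p k n : ℕ} (Y : Fin n → Fin p → ℝ) (θ : FactorParam p k n) : ℝ :=
  ∏ i : Fin n, ∏ j : Fin p,
    (2 * π * θ.2.1.1 j) ^ (-(1 : ℝ) / 2) *
      Real.exp (-(Y i j - ∑ l, θ.1 j l * θ.2.2 i l) ^ 2 / (2 * θ.2.1.1 j))

/-- The likelihood along the parametric arithmetic mean path: f(Y|θ,t) = f(Y|(Λ_t,σ²,η)). -/
noncomputable def pathLik {p k n : ℕ} (Y : Fin n → Fin p → ℝ) (θ : FactorParam p k n)
    (t : ℝ) : ℝ :=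
  lik Y (pathLam t θ.1, θ.2)

/-- The score function U(θ,Y,t) = ∑ᵢ∑ⱼ (y_{ij} − (Λ_t ηᵢ)_j) σⱼ^{−2} Λ_{jk} η_{ik}. -/
noncomputable def scoreU {p k n : ℕ} (Y : Fin n → Fin p → ℝ) (θ : FactorParam p k n)
    (t : ℝ) : ℝ :=
  ∑ i : Fin n, ∑ j : Fin p,
    (Y i j - ∑ l, pathLam t θ.1 j l * θ.2.2 i l) * (θ.2.1.1 j)⁻¹ *
      (θ.1 j (Fin.last k) * θ.2.2 i (Fin.last k))

/-- The dominating function Q(θ,Y), free of t. -/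
noncomputable def Qbound {p k n : ℕ} (Y : Fin n → Fin p → ℝ) (θ : FactorParam p k n) : ℝ :=
  ∑ i : Fin n, ∑ j : Fin p,
    (|Y i j| + ∑ l, |θ.1 j l| * |θ.2.2 i l|) * (θ.2.1.1 j)⁻¹ *
      (|θ.1 j (Fin.last k)| * |θ.2.2 i (Fin.last k)|)

/-- The Borel-type product σ-algebra on the space of loading matrices. -/
instance {p k : ℕ} : MeasurableSpace (Matrix (Fin p) (Fin (k + 1)) ℝ) :=
  MeasurableSpace.pi

section AuxLemmas

variable {p k n : ℕ}

noncomputable def Cc (θ : FactorParam p k n) : ℝ :=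
  ∏ i : Fin n, ∏ j : Fin p, (2 * π * θ.2.1.1 j) ^ (-(1 : ℝ) / 2)

noncomputable def Sf (Y : Fin n → Fin p → ℝ) (θ : FactorParam p k n) (t : ℝ) : ℝ :=
  ∑ i : Fin n, ∑ j : Fin p,
    -(Y i j - ∑ l, pathLam t θ.1 j l * θ.2.2 i l) ^ 2 / (2 * θ.2.1.1 j)

lemma pathLik_eq (Y : Fin n → Fin p → ℝ) (θ : FactorParam p k n) (t : ℝ) :
    pathLik Y θ t = Cc θ * Real.exp (Sf Y θ t) := by
  unfold pathLik lik Cc Sf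
  simp only [Finset.prod_mul_distrib, Real.exp_sum]

lemma Cc_pos (θ : FactorParam p k n) : 0 < Cc θ := by
  refine Finset.prod_pos fun i _ => Finset.prod_pos fun j _ => ?_
  exact Real.rpow_pos_of_pos (by have := θ.2.1.2 j; positivity) _

lemma pathLik_pos (Y : Fin n → Fin p → ℝ) (θ : FactorParam p k n) (t : ℝ) :
    0 < pathLik Y θ t := by
  rw [pathLik_eq]
  exact mul_pos (Cc_pos θ) (Real.exp_pos _)

lemma hasDerivAt_inner (θ : FactorParam p k n) (i : Fin n) (j : Fin p) (t : ℝ) :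
    HasDerivAt (fun t => ∑ l, pathLam t θ.1 j l * θ.2.2 i l)
      (θ.1 j (Fin.last k) * θ.2.2 i (Fin.last k)) t := by
  have h : ∀ l : Fin (k + 1), HasDerivAt (fun t => pathLam t θ.1 j l * θ.2.2 i l)
      (if l = Fin.last k then θ.1 j l * θ.2.2 i l else 0) t := by
    intro l
    by_cases hl : l = Fin.last k
    · simp only [pathLam, hl, if_pos]
      simpa [mul_assoc] using (hasDerivAt_id t).mul_const (θ.1 j (Fin.last k) * θ.2.2 i (Fin.last k))
    · simp only [pathLam, hl, if_neg, if_false]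
      exact hasDerivAt_const t _
  have := HasDerivAt.fun_sum (fun l (_ : l ∈ Finset.univ) => h l)
  simpa using this

lemma hasDerivAt_pathLik (Y : Fin n → Fin p → ℝ) (θ : FactorParam p k n) (t : ℝ) :
    HasDerivAt (fun t => pathLik Y θ t) (scoreU Y θ t * pathLik Y θ t) t := by
  have hσ : ∀ j, (0 : ℝ) < θ.2.1.1 j := θ.2.1.2
  have hS : HasDerivAt (fun t => Sf Y θ t) (scoreU Y θ t) t := by
    unfold Sf scoreU
    refine HasDerivAt.fun_sum fun i _ => HasDerivAt.fun_sum fun j _ => ?_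
    have he := (hasDerivAt_inner θ i j t).const_sub (Y i j)
    have h2 := ((he.pow 2).neg).div_const (2 * θ.2.1.1 j)
    refine h2.congr_deriv ?_
    have hne : θ.2.1.1 j ≠ 0 := ne_of_gt (hσ j)
    field_simp
    ring
  have hgoal := (hS.exp).const_mul (Cc θ)
  simp only [pathLik_eq Y θ]
  refine hgoal.congr_deriv ?_
  ring

lemma cont_pathLik (Y : Fin n → Fin p → ℝ) (θ : FactorParam p k n) :
    Continuous fun t => pathLik Y θ t :=
  continuous_iff_continuousAt.mpr fun t => (hasDerivAt_pathLik Y θ t).continuousAt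

lemma cont_scoreU (Y : Fin n → Fin p → ℝ) (θ : FactorParam p k n) :
    Continuous fun t => scoreU Y θ t := by
  unfold scoreU
  refine continuous_finset_sum _ fun i _ => continuous_finset_sum _ fun j _ => ?_
  have h : Continuous fun t => ∑ l, pathLam t θ.1 j l * θ.2.2 i l :=
    continuous_iff_continuousAt.mpr fun t => (hasDerivAt_inner θ i j t).continuousAt
  exact (((continuous_const.sub h).mul continuous_const).mul continuous_const)

lemma Qbound_nonneg (Y : Fin n → Fin p → ℝ) (θ : FactorParam p k n) : 0 ≤ Qbound Y θ := by
  have hσ : ∀ j, (0 : ℝ) < θ.2.1.1 j := θ.2.1.2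
  refine Finset.sum_nonneg fun i _ => Finset.sum_nonneg fun j _ => ?_
  have h1 : (0:ℝ) ≤ |Y i j| + ∑ l, |θ.1 j l| * |θ.2.2 i l| := by
    have : (0:ℝ) ≤ ∑ l, |θ.1 j l| * |θ.2.2 i l| :=
      Finset.sum_nonneg fun l _ => mul_nonneg (abs_nonneg _) (abs_nonneg _)
    positivity
  have h2 : (0:ℝ) ≤ (θ.2.1.1 j)⁻¹ := (inv_pos.mpr (hσ j)).le
  exact mul_nonneg (mul_nonneg h1 h2) (mul_nonneg (abs_nonneg _) (abs_nonneg _))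

lemma abs_scoreU_le (Y : Fin n → Fin p → ℝ) (θ : FactorParam p k n) {t : ℝ}
    (ht : t ∈ Set.Icc (0 : ℝ) 1) : |scoreU Y θ t| ≤ Qbound Y θ := by
  have hσ : ∀ j, (0 : ℝ) < θ.2.1.1 j := θ.2.1.2
  have htabs : |t| ≤ 1 := abs_le.mpr ⟨by linarith [ht.1], ht.2⟩
  unfold scoreU Qbound
  refine (Finset.abs_sum_le_sum_abs _ _).trans (Finset.sum_le_sum fun i _ => ?_)
  refine (Finset.abs_sum_le_sum_abs _ _).trans (Finset.sum_le_sum fun j _ => ?_)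
  have hpl : ∀ l, |pathLam t θ.1 j l| ≤ |θ.1 j l| := by
    intro l
    by_cases hl : l = Fin.last k
    · subst hl
      have hrw : pathLam t θ.1 j (Fin.last k) = t * θ.1 j (Fin.last k) := by simp [pathLam]
      rw [hrw, abs_mul]
      exact mul_le_of_le_one_left (abs_nonneg _) htabs
    · have hrw : pathLam t θ.1 j l = θ.1 j l := by simp [pathLam, hl]
      rw [hrw]
  have h1 : |Y i j - ∑ l, pathLam t θ.1 j l * θ.2.2 i l| ≤
      |Y i j| + ∑ l, |θ.1 j l| * |θ.2.2 i l| := by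
    refine (abs_sub _ _).trans ?_
    gcongr
    refine (Finset.abs_sum_le_sum_abs _ _).trans (Finset.sum_le_sum fun l _ => ?_)
    rw [abs_mul]
    exact mul_le_mul_of_nonneg_right (hpl l) (abs_nonneg _)
  rw [abs_mul, abs_mul, abs_mul, abs_inv, abs_of_pos (hσ j)]
  have h2 : (0:ℝ) ≤ (θ.2.1.1 j)⁻¹ := (inv_pos.mpr (hσ j)).le
  exact mul_le_mul_of_nonneg_right (mul_le_mul_of_nonneg_right h1 h2)
    (mul_nonneg (abs_nonneg _) (abs_nonneg _))

lemma meas_coord_Λ (j : Fin p) (l : Fin (k + 1)) :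
    Measurable fun θ : FactorParam p k n => θ.1 j l :=
  (measurable_pi_apply l).comp ((measurable_pi_apply j).comp measurable_fst)

lemma meas_coord_σ (j : Fin p) :
    Measurable fun θ : FactorParam p k n => θ.2.1.1 j :=
  (measurable_pi_apply j).comp (measurable_subtype_coe.comp (measurable_fst.comp measurable_snd))

lemma meas_coord_η (i : Fin n) (l : Fin (k + 1)) :
    Measurable fun θ : FactorParam p k n => θ.2.2 i l :=
  (measurable_pi_apply l).comp ((measurable_pi_apply i).comp (measurable_snd.comp measurable_snd))

lemma meas_inner (Y : Fin n → Fin p → ℝ) (t : ℝ) (i : Fin n) (j : Fin p) :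
    Measurable fun θ : FactorParam p k n => ∑ l, pathLam t θ.1 j l * θ.2.2 i l := by
  refine Finset.measurable_sum _ fun l _ => ?_
  by_cases hl : l = Fin.last k
  · have hrw : (fun θ : FactorParam p k n => pathLam t θ.1 j l * θ.2.2 i l) =
        fun θ => t * θ.1 j l * θ.2.2 i l := by
      funext θ; simp [pathLam, hl]
    rw [hrw]
    exact ((meas_coord_Λ j l).const_mul t).mul (meas_coord_η i l)
  · have hrw : (fun θ : FactorParam p k n => pathLam t θ.1 j l * θ.2.2 i l) =
        fun θ => θ.1 j l * θ.2.2 i l := by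
      funext θ; simp [pathLam, hl]
    rw [hrw]
    exact (meas_coord_Λ j l).mul (meas_coord_η i l)

lemma meas_pathLik (Y : Fin n → Fin p → ℝ) (t : ℝ) :
    Measurable fun θ : FactorParam p k n => pathLik Y θ t := by
  simp only [pathLik_eq]
  have hC : Measurable fun θ : FactorParam p k n => Cc θ := by
    refine Finset.measurable_prod _ fun i _ => Finset.measurable_prod _ fun j _ => ?_
    have hbase : Measurable fun θ : FactorParam p k n => 2 * π * θ.2.1.1 j :=
      (meas_coord_σ j).const_mul (2 * π)
    have heq : (fun θ : FactorParam p k n => (2 * π * θ.2.1.1 j) ^ (-(1 : ℝ) / 2)) =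
        fun θ => Real.exp (Real.log (2 * π * θ.2.1.1 j) * (-(1 : ℝ) / 2)) := by
      funext θ
      exact Real.rpow_def_of_pos (by have := θ.2.1.2 j; positivity) _
    rw [heq]
    exact Real.measurable_exp.comp ((Real.measurable_log.comp hbase).mul measurable_const)
  have hS : Measurable fun θ : FactorParam p k n => Sf Y θ t := by
    refine Finset.measurable_sum _ fun i _ => Finset.measurable_sum _ fun j _ => ?_
    exact (((measurable_const.sub (meas_inner Y t i j)).pow_const 2).neg).div
      ((meas_coord_σ j).const_mul 2)
  exact hC.mul (Real.measurable_exp.comp hS)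

lemma meas_scoreU (Y : Fin n → Fin p → ℝ) (t : ℝ) :
    Measurable fun θ : FactorParam p k n => scoreU Y θ t := by
  unfold scoreU
  refine Finset.measurable_sum _ fun i _ => Finset.measurable_sum _ fun j _ => ?_
  exact (((measurable_const.sub (meas_inner Y t i j)).mul ((meas_coord_σ j).inv)).mul
    ((meas_coord_Λ j (Fin.last k)).mul (meas_coord_η i (Fin.last k))))

end AuxLemmas

theorem log_bayes_factor_eq_path_sampling_integral {p k n : ℕ} (Y : Fin n → Fin p → ℝ)
    (P : MeasureTheory.Measure (FactorParam p k n)) [MeasureTheory.IsProbabilityMeasure P]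
    (hQ : MeasureTheory.Integrable (fun θ => Qbound Y θ) P)
    (M : ℝ) (hM : ∀ᵐ θ ∂P, ∀ t ∈ Set.Icc (0 : ℝ) 1, pathLik Y θ t ≤ M) :
    Real.log (∫ θ, pathLik Y θ 1 ∂P) - Real.log (∫ θ, pathLik Y θ 0 ∂P) =
      ∫ t in (0 : ℝ)..1,
        (∫ θ, scoreU Y θ t * pathLik Y θ t ∂P) / ∫ θ, pathLik Y θ t ∂P := by
  classical
  set z : ℝ → ℝ := fun t => ∫ θ, pathLik Y θ t ∂P with hzdef
  set N : ℝ → ℝ := fun t => ∫ θ, scoreU Y θ t * pathLik Y θ t ∂P with hNdef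
  have hposθ : ∀ (θ : FactorParam p k n) (t : ℝ), 0 < pathLik Y θ t := pathLik_pos Y
  have hmeas : ∀ t : ℝ, AEStronglyMeasurable (fun θ => pathLik Y θ t) P :=
    fun t => (meas_pathLik Y t).aestronglyMeasurable
  have hmeasN : ∀ t : ℝ, AEStronglyMeasurable (fun θ => scoreU Y θ t * pathLik Y θ t) P :=
    fun t => ((meas_scoreU Y t).mul (meas_pathLik Y t)).aestronglyMeasurable
  haveI : (MeasureTheory.ae P).NeBot := ae_neBot.mpr (IsProbabilityMeasure.ne_zero P)
  have hMpos : 0 < M := by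
    obtain ⟨θ, hθ⟩ := hM.exists
    exact lt_of_lt_of_le (hposθ θ 0) (hθ 0 (by norm_num))
  have hint : ∀ t ∈ Set.Icc (0:ℝ) 1, Integrable (fun θ => pathLik Y θ t) P := by
    intro t ht
    refine Integrable.mono' (integrable_const M) (hmeas t) ?_
    filter_upwards [hM] with θ hθ
    rw [Real.norm_eq_abs, abs_of_pos (hposθ θ t)]
    exact hθ t ht
  have hboundN : ∀ t ∈ Set.Icc (0:ℝ) 1, ∀ᵐ θ ∂P,
      ‖scoreU Y θ t * pathLik Y θ t‖ ≤ Qbound Y θ * M := by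
    intro t ht
    filter_upwards [hM] with θ hθ
    rw [Real.norm_eq_abs, abs_mul, abs_of_pos (hposθ θ t)]
    exact mul_le_mul (abs_scoreU_le Y θ ht) (hθ t ht) (hposθ θ t).le (Qbound_nonneg Y θ)
  have hQM : Integrable (fun θ => Qbound Y θ * M) P := hQ.mul_const M
  have hzpos : ∀ t ∈ Set.Icc (0:ℝ) 1, 0 < z t := by
    intro t ht
    rw [hzdef]
    rw [integral_pos_iff_support_of_nonneg_ae
      (Eventually.of_forall fun θ => (hposθ θ t).le) (hint t ht)]
    have hsupp : Function.support (fun θ : FactorParam p k n => pathLik Y θ t) = Set.univ := by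
      ext θ; simp [Function.support, (hposθ θ t).ne']
    rw [hsupp]
    simp
  have hz' : ∀ t ∈ Set.Ioo (0:ℝ) 1, HasDerivAt z (N t) t := by
    intro t ht
    have hε0 : 0 < min t (1 - t) := lt_min ht.1 (by linarith [ht.2])
    have hball : Metric.ball t (min t (1 - t)) ⊆ Set.Icc (0:ℝ) 1 := by
      intro x hx
      rw [Metric.mem_ball, Real.dist_eq] at hx
      have h1 := abs_lt.mp hx
      have h2 := min_le_left t (1 - t)
      have h3 := min_le_right t (1 - t)
      constructor <;> [linarith; linarith]
    have key := hasDerivAt_integral_of_dominated_loc_of_deriv_le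
      (F := fun t θ => pathLik Y θ t) (F' := fun t θ => scoreU Y θ t * pathLik Y θ t)
      (bound := fun θ => Qbound Y θ * M) (Metric.ball_mem_nhds t hε0)
      (Eventually.of_forall fun s => hmeas s)
      (hint t (Set.Ioo_subset_Icc_self ht))
      (hmeasN t)
      ?_ hQM ?_
    · exact key.2
    · filter_upwards [hM] with θ hθ
      intro s hs
      have hsI := hball hs
      rw [Real.norm_eq_abs, abs_mul, abs_of_pos (hposθ θ s)]
      exact mul_le_mul (abs_scoreU_le Y θ hsI) (hθ s hsI) (hposθ θ s).le (Qbound_nonneg Y θ)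
    · exact Eventually.of_forall fun θ s _ => hasDerivAt_pathLik Y θ s
  have hzc : ContinuousOn z (Set.Icc (0:ℝ) 1) := by
    intro t ht
    refine continuousWithinAt_of_dominated (bound := fun _ => M)
      (Eventually.of_forall fun s => hmeas s) ?_ (integrable_const M) ?_
    · filter_upwards [self_mem_nhdsWithin] with s hs
      filter_upwards [hM] with θ hθ
      rw [Real.norm_eq_abs, abs_of_pos (hposθ θ s)]
      exact hθ s hs
    · exact Eventually.of_forall fun θ => (cont_pathLik Y θ).continuousWithinAt
  have hNc : ContinuousOn N (Set.Icc (0:ℝ) 1) := by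
    intro t ht
    refine continuousWithinAt_of_dominated (bound := fun θ => Qbound Y θ * M)
      (Eventually.of_forall fun s => hmeasN s) ?_ hQM ?_
    · filter_upwards [self_mem_nhdsWithin] with s hs
      exact hboundN s hs
    · exact Eventually.of_forall fun θ =>
        ((cont_scoreU Y θ).mul (cont_pathLik Y θ)).continuousWithinAt
  have hg : ContinuousOn (fun t => Real.log (z t)) (Set.Icc (0:ℝ) 1) :=
    ContinuousOn.log hzc fun t ht => (hzpos t ht).ne'
  have hderiv : ∀ t ∈ Set.Ioo (0:ℝ) 1,
      HasDerivWithinAt (fun t => Real.log (z t)) (N t / z t) (Set.Ioi t) t := by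
    intro t ht
    exact ((hz' t ht).log (hzpos t (Set.Ioo_subset_Icc_self ht)).ne').hasDerivWithinAt
  have hintg : IntervalIntegrable (fun t => N t / z t) MeasureTheory.volume 0 1 := by
    apply ContinuousOn.intervalIntegrable
    rw [Set.uIcc_of_le (zero_le_one)]
    exact hNc.div hzc fun t ht => (hzpos t ht).ne'
  have key := intervalIntegral.integral_eq_sub_of_hasDeriv_right_of_le zero_le_one
    hg hderiv hintg
  rw [key]
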